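/- arXiv:1505.04093 — 2 statements merged into one kernel-verified Lean document; each statement's English description precedes it below -/
import Mathlib

section
/- There exist monotone reparametrizations φ_X of X and φ_Y of Y such that d(φ_X(t), φ_Y(t)) ≤ ε for all t ∈ [0,1] if and only if there exists u ∈ [0,m] such that (u, 0) ∈ g↑, (u+m, n) ∈ g_↓, u+m ≤ r↑(u, 0), and u ≤ r_↓(u+m, n). -/
open Set

noncomputable section

/-- The piecewise linear closed curve through the vertices `x 0, x 1, …`:
`f(i+α) = (1-α) • x i + α • x (i+1)`. -/
def fCurve {k : ℕ} (x : ℕ → EuclideanSpace ℝ (Fin k)) (t : ℝ) :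
    EuclideanSpace ℝ (Fin k) :=
  (1 - Int.fract t) • x (⌊t⌋.toNat) + Int.fract t • x (⌊t⌋.toNat + 1)

/-- The extension of the curve from `[0,m]` to `[0,2m]` by `f(u) = f(u-m)` for `u > m`. -/
def fCurveExt {k : ℕ} (m : ℕ) (x : ℕ → EuclideanSpace ℝ (Fin k)) (u : ℝ) :
    EuclideanSpace ℝ (Fin k) :=
  if u ≤ m then fCurve x u else fCurve x (u - m)

/-- The rectangle `D = [0,2m] × [0,n]`. -/
def Dfull (m n : ℕ) : Set (ℝ × ℝ) :=
  Icc (0:ℝ) (2*(m:ℝ)) ×ˢ Icc (0:ℝ) (n:ℝ)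

/-- The free space `D_ε = {(u,v) ∈ D : dist (f_X u) (f_Y v) ≤ ε}`. -/
def Dfree {k : ℕ} (m n : ℕ) (x y : ℕ → EuclideanSpace ℝ (Fin k)) (ε : ℝ) :
    Set (ℝ × ℝ) :=
  {p ∈ Dfull m n | dist (fCurveExt m x p.1) (fCurve y p.2) ≤ ε}

/-- The top side `T = [0,2m] × {n}` of `D`. -/
def Tside (m n : ℕ) : Set (ℝ × ℝ) := Icc (0:ℝ) (2*(m:ℝ)) ×ˢ {(n:ℝ)}

/-- The bottom side `B = [0,2m] × {0}` of `D`. -/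
def Bside (m : ℕ) : Set (ℝ × ℝ) := Icc (0:ℝ) (2*(m:ℝ)) ×ˢ {(0:ℝ)}

/-- A monotone (non-decreasing) path: a connected subset `γ ⊆ Dε` with
`(u-u')·(v-v') ≥ 0` for all `(u,v), (u',v') ∈ γ`. -/
def IsMonPath (Dε γ : Set (ℝ × ℝ)) : Prop :=
  γ ⊆ Dε ∧ IsConnected γ ∧
    ∀ p ∈ γ, ∀ q ∈ γ, (p.1 - q.1) * (p.2 - q.2) ≥ 0

/-- Two points are mutually reachable if some monotone path contains both. -/
def Reach (Dε : Set (ℝ × ℝ)) (p q : ℝ × ℝ) : Prop :=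
  ∃ γ : Set (ℝ × ℝ), IsMonPath Dε γ ∧ p ∈ γ ∧ q ∈ γ

/-- `g↓`: the points of `Dε` mutually reachable with at least one point of `B`. -/
def gDown (m : ℕ) (Dε : Set (ℝ × ℝ)) : Set (ℝ × ℝ) :=
  {p ∈ Dε | ∃ q ∈ Bside m, Reach Dε p q}

/-- `g↑`: the points of `Dε` mutually reachable with at least one point of `T`. -/
def gUp (m n : ℕ) (Dε : Set (ℝ × ℝ)) : Set (ℝ × ℝ) :=
  {p ∈ Dε | ∃ q ∈ Tside m n, Reach Dε p q}

/-- The pointer `r↑(p)`: the maximum `u* ∈ [0,2m]` such that `p` and `(u*, n)`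
are mutually reachable. -/
def rUp (m n : ℕ) (Dε : Set (ℝ × ℝ)) (p : ℝ × ℝ) : ℝ :=
  sSup {u : ℝ | u ∈ Icc (0:ℝ) (2*(m:ℝ)) ∧ Reach Dε p (u, (n:ℝ))}

/-- The pointer `r↓(p)`: for `p` with `p.2 > 0`, the maximum `u* ∈ [0,2m]` such
that `p` and `(u*, 0)` are mutually reachable; on the bottom side `r↓(u,0) = u`. -/
def rDown (m : ℕ) (Dε : Set (ℝ × ℝ)) (p : ℝ × ℝ) : ℝ :=
  if p.2 = 0 then p.1
  else sSup {u : ℝ | u ∈ Icc (0:ℝ) (2*(m:ℝ)) ∧ Reach Dε p (u, (0:ℝ))}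

/-- The cell `D_ij = [i-1,i] × [j-1,j]`. -/
def cellD (i j : ℕ) : Set (ℝ × ℝ) :=
  Icc ((i:ℝ)-1) (i:ℝ) ×ˢ Icc ((j:ℝ)-1) (j:ℝ)

/-- The top side `T_ij` of the cell `D_ij`. -/
def cellT (i j : ℕ) : Set (ℝ × ℝ) := Icc ((i:ℝ)-1) (i:ℝ) ×ˢ {(j:ℝ)}

/-- The bottom side `B_ij` of the cell `D_ij`. -/
def cellB (i j : ℕ) : Set (ℝ × ℝ) := Icc ((i:ℝ)-1) (i:ℝ) ×ˢ {((j:ℝ)-1)}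

/-- The right side `R_ij` of the cell `D_ij`. -/
def cellR (i j : ℕ) : Set (ℝ × ℝ) := {(i:ℝ)} ×ˢ Icc ((j:ℝ)-1) (j:ℝ)

/-- The left side `L_ij` of the cell `D_ij`. -/
def cellL (i j : ℕ) : Set (ℝ × ℝ) := {((i:ℝ)-1)} ×ˢ Icc ((j:ℝ)-1) (j:ℝ)

/-- The partial order `≼` on `D`: `(u1,v1) ≼ (u2,v2)` iff `u1 ≤ u2` and `v1 ≥ v2`. -/
def prec (p q : ℝ × ℝ) : Prop := p.1 ≤ q.1 ∧ q.2 ≤ p.2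

/-- `W_m`: continuous non-decreasing functions `w : [0,1] → [0,m]` with
`w 0 = 0` and `w 1 = m`. -/
def IsW (m : ℕ) (w : ℝ → ℝ) : Prop :=
  ContinuousOn w (Icc (0:ℝ) 1) ∧ MonotoneOn w (Icc (0:ℝ) 1) ∧
    (∀ t ∈ Icc (0:ℝ) 1, w t ∈ Icc (0:ℝ) (m:ℝ)) ∧ w 0 = 0 ∧ w 1 = m

/-- The cyclic shift of `[0,m]` by `τ`. -/
def cshift (m : ℕ) (τ t : ℝ) : ℝ := if t + τ ≤ m then t + τ else t + τ - m

/-- A monotone reparametrization of the closed `m`-gonal curve with vertices `x`. -/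
def IsReparam {k : ℕ} (m : ℕ) (x : ℕ → EuclideanSpace ℝ (Fin k))
    (φ : ℝ → EuclideanSpace ℝ (Fin k)) : Prop :=
  ∃ w : ℝ → ℝ, ∃ τ ∈ Icc (0:ℝ) (m:ℝ), IsW m w ∧
    ∀ t ∈ Icc (0:ℝ) 1, φ t = fCurve x (cshift m τ (w t))

section Basics

variable {k : ℕ} {x : ℕ → EuclideanSpace ℝ (Fin k)}

lemma fCurve_nat (x : ℕ → EuclideanSpace ℝ (Fin k)) (i : ℕ) : fCurve x (i:ℝ) = x i := by
  simp [fCurve, Int.fract_natCast, Int.floor_natCast]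

lemma fCurve_eq_affine (i : ℕ) {t : ℝ} (h1 : (i:ℝ) ≤ t) (h2 : t < (i:ℝ)+1) :
    fCurve x t = (1-(t-i)) • x i + (t-i) • x (i+1) := by
  have hf : ⌊t⌋ = (i:ℤ) := by
    rw [Int.floor_eq_iff]
    constructor <;> push_cast <;> [exact h1; exact h2]
  simp [fCurve, Int.fract, hf]

lemma continuousOn_union_closed {E : Type*} [TopologicalSpace E] {f : ℝ → E} {s t : Set ℝ}
    (hs : IsClosed s) (ht : IsClosed t) (hfs : ContinuousOn f s) (hft : ContinuousOn f t) :
    ContinuousOn f (s ∪ t) := by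
  intro z hz
  rcases hz with hz | hz
  · apply ContinuousWithinAt.union (hfs z hz)
    by_cases hzt : z ∈ t
    · exact hft z hzt
    · exact continuousWithinAt_of_notMem_closure (by rwa [ht.closure_eq])
  · refine ContinuousWithinAt.union ?_ (hft z hz)
    by_cases hzs : z ∈ s
    · exact hfs z hzs
    · exact continuousWithinAt_of_notMem_closure (by rwa [hs.closure_eq])

lemma contOn_fCurve_piece (x : ℕ → EuclideanSpace ℝ (Fin k)) (i : ℕ) :
    ContinuousOn (fCurve x) (Icc (i:ℝ) ((i:ℝ)+1)) := by
  have hg : Continuous fun t : ℝ => (1-(t-(i:ℝ))) • x i + (t-(i:ℝ)) • x (i+1) := by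
    continuity
  apply ContinuousOn.congr hg.continuousOn
  intro t ht
  rcases eq_or_lt_of_le ht.2 with h | h
  · subst h
    have : ((i:ℝ)+1) = ((i+1 : ℕ) : ℝ) := by push_cast; ring
    rw [this, fCurve_nat]
    simp
  · rw [fCurve_eq_affine i ht.1 h]

lemma contOn_fCurve (x : ℕ → EuclideanSpace ℝ (Fin k)) (N : ℕ) :
    ContinuousOn (fCurve x) (Icc (0:ℝ) (N:ℝ)) := by
  induction N with
  | zero =>
      simp only [Nat.cast_zero, Icc_self]
      exact continuousOn_singleton _ _
  | succ N ih =>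
      have hu : Icc (0:ℝ) ((N:ℝ)) ∪ Icc ((N:ℝ)) ((N:ℝ)+1) = Icc (0:ℝ) ((N+1:ℕ):ℝ) := by
        rw [Icc_union_Icc_eq_Icc (by positivity) (by linarith)]
        push_cast; ring_nf
      rw [← hu]
      exact continuousOn_union_closed isClosed_Icc isClosed_Icc ih (contOn_fCurve_piece x N)

end Basics
section Ext

variable {k : ℕ} {x y : ℕ → EuclideanSpace ℝ (Fin k)} {m n : ℕ} {ε : ℝ}

lemma fCurveExt_of_le {u : ℝ} (h : u ≤ m) : fCurveExt m x u = fCurve x u := if_pos h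

lemma contOn_fCurveExt (hx : x m = x 0) :
    ContinuousOn (fCurveExt m x) (Icc (0:ℝ) (2*(m:ℝ))) := by
  have h1 : ContinuousOn (fCurveExt m x) (Icc (0:ℝ) (m:ℝ)) := by
    apply ContinuousOn.congr (contOn_fCurve x m)
    intro u hu; exact fCurveExt_of_le hu.2
  have h2 : ContinuousOn (fCurveExt m x) (Icc ((m:ℝ)) (2*(m:ℝ))) := by
    have hg : ContinuousOn (fun u : ℝ => fCurve x (u - m)) (Icc ((m:ℝ)) (2*(m:ℝ))) := by
      apply (contOn_fCurve x m).comp (by fun_prop)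
      intro u hu
      constructor
      · show (0:ℝ) ≤ u - m; linarith [hu.1]
      · show u - (m:ℝ) ≤ m; linarith [hu.2]
    apply ContinuousOn.congr hg
    intro u hu
    rcases eq_or_lt_of_le hu.1 with h | h
    · rw [← h, fCurveExt_of_le le_rfl]
      simp only [sub_self]
      rw [show ((m:ℝ)) = ((m:ℕ):ℝ) from rfl, fCurve_nat, hx, show (0:ℝ) = ((0:ℕ):ℝ) by simp,
        fCurve_nat]
    · rw [fCurveExt, if_neg (by linarith)]
  have hu : Icc (0:ℝ) ((m:ℝ)) ∪ Icc ((m:ℝ)) (2*(m:ℝ)) = Icc (0:ℝ) (2*(m:ℝ)) := by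
    rw [Icc_union_Icc_eq_Icc (by positivity) (by linarith [Nat.cast_nonneg (α := ℝ) m])]
  rw [← hu]
  exact continuousOn_union_closed isClosed_Icc isClosed_Icc h1 h2

lemma fCurveExt_period (hx : x m = x 0) {r : ℝ} (h0 : 0 ≤ r) (h1 : r ≤ m) :
    fCurveExt m x (r + m) = fCurveExt m x r := by
  rcases eq_or_lt_of_le h0 with h | h
  · subst h
    rw [zero_add, fCurveExt_of_le le_rfl, fCurveExt_of_le (by positivity)]
    rw [show ((m:ℝ)) = ((m:ℕ):ℝ) from rfl, fCurve_nat, hx, show (0:ℝ) = ((0:ℕ):ℝ) by simp,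
      fCurve_nat]
  · rw [fCurveExt_of_le h1, fCurveExt, if_neg (by linarith), add_sub_cancel_right]

lemma fCurveExt_cshift (m : ℕ) (x : ℕ → EuclideanSpace ℝ (Fin k)) (τ w : ℝ) :
    fCurveExt m x (w + τ) = fCurve x (cshift m τ w) := by
  rw [cshift, fCurveExt, apply_ite (fCurve x)]

lemma Dfree_subset : Dfree m n x y ε ⊆ Dfull m n := sep_subset _ _

lemma mem_Dfull_iff {p : ℝ × ℝ} :
    p ∈ Dfull m n ↔ (0 ≤ p.1 ∧ p.1 ≤ 2*(m:ℝ)) ∧ (0 ≤ p.2 ∧ p.2 ≤ (n:ℝ)) := by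
  simp only [Dfull, Set.mem_prod, mem_Icc]

lemma isClosed_Dfree (hx : x m = x 0) : IsClosed (Dfree m n x y ε) := by
  have hD : IsClosed (Dfull m n) := (isClosed_Icc).prod isClosed_Icc
  have hg : ContinuousOn (fun p : ℝ × ℝ => dist (fCurveExt m x p.1) (fCurve y p.2))
      (Dfull m n) := by
    exact continuous_dist.comp_continuousOn
      (((contOn_fCurveExt hx).comp continuous_fst.continuousOn fun p hp => hp.1).prodMk
        ((contOn_fCurve y n).comp continuous_snd.continuousOn fun p hp => hp.2))
  have : Dfree m n x y ε
      = Dfull m n ∩ (fun p : ℝ × ℝ => dist (fCurveExt m x p.1) (fCurve y p.2)) ⁻¹' Iic ε := by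
    ext p; simp [Dfree, Set.mem_sep_iff, Set.mem_inter_iff, mem_preimage, mem_Iic]
  rw [this]
  exact hg.preimage_isClosed_of_isClosed hD isClosed_Iic

lemma isCompact_Dfree (hx : x m = x 0) : IsCompact (Dfree m n x y ε) :=
  ((isCompact_Icc.prod isCompact_Icc).of_isClosed_subset (isClosed_Dfree hx) Dfree_subset)

end Ext
section Path

variable {Dε : Set (ℝ × ℝ)}

lemma IsMonPath.order {γ : Set (ℝ × ℝ)} (hγ : IsMonPath Dε γ) {p q : ℝ × ℝ}
    (hp : p ∈ γ) (hq : q ∈ γ) (h : p.1 + p.2 ≤ q.1 + q.2) : p.1 ≤ q.1 ∧ p.2 ≤ q.2 := by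
  have hc := hγ.2.2 p hp q hq
  constructor
  · by_contra hlt; push_neg at hlt
    have : (p.1 - q.1) * (p.2 - q.2) < 0 :=
      mul_neg_of_pos_of_neg (by linarith) (by linarith)
    linarith
  · by_contra hlt; push_neg at hlt
    have : (p.1 - q.1) * (p.2 - q.2) < 0 :=
      mul_neg_of_neg_of_pos (by linarith) (by linarith)
    linarith

lemma IsMonPath.eq_of_sum_eq {γ : Set (ℝ × ℝ)} (hγ : IsMonPath Dε γ) {p q : ℝ × ℝ}
    (hp : p ∈ γ) (hq : q ∈ γ) (h : p.1 + p.2 = q.1 + q.2) : p = q := by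
  have h1 := hγ.order hp hq h.le
  have h2 := hγ.order hq hp h.ge
  exact Prod.ext (le_antisymm h1.1 h2.1) (le_antisymm h1.2 h2.2)

/-- Parametrize a monotone path between two of its points by `s = u + v`. -/
lemma IsMonPath.exists_curve {γ : Set (ℝ × ℝ)} (hγ : IsMonPath Dε γ) {p q : ℝ × ℝ}
    (hp : p ∈ γ) (hq : q ∈ γ) (hpq : p.1 + p.2 ≤ q.1 + q.2) :
    ∃ c : ℝ → ℝ × ℝ,
      (∀ s ∈ Icc (p.1+p.2) (q.1+q.2), c s ∈ γ ∧ (c s).1 + (c s).2 = s) ∧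
      c (p.1+p.2) = p ∧ c (q.1+q.2) = q ∧
      (∀ s ∈ Icc (p.1+p.2) (q.1+q.2), ∀ s' ∈ Icc (p.1+p.2) (q.1+q.2), s ≤ s' →
        (c s).1 ≤ (c s').1 ∧ (c s).2 ≤ (c s').2 ∧
          (c s').1 - (c s).1 ≤ s' - s ∧ (c s').2 - (c s).2 ≤ s' - s) ∧
      ContinuousOn c (Icc (p.1+p.2) (q.1+q.2)) := by
  set sp := p.1 + p.2 with hsp
  set sq := q.1 + q.2 with hsq
  have hex : ∀ s ∈ Icc sp sq, ∃ r, r ∈ γ ∧ r.1 + r.2 = s := by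
    intro s hs
    have himg : IsPreconnected ((fun r : ℝ × ℝ => r.1 + r.2) '' γ) :=
      (hγ.2.1.image _ (continuous_fst.add continuous_snd).continuousOn).isPreconnected
    have hsub : Icc sp sq ⊆ (fun r : ℝ × ℝ => r.1 + r.2) '' γ :=
      himg.Icc_subset ⟨p, hp, rfl⟩ ⟨q, hq, rfl⟩
    obtain ⟨r, hr, hrs⟩ := hsub hs
    exact ⟨r, hr, hrs⟩
  classical
  set c : ℝ → ℝ × ℝ := fun s =>
    if h : ∃ r, r ∈ γ ∧ r.1 + r.2 = s then h.choose else p with hc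
  have hmem : ∀ s ∈ Icc sp sq, c s ∈ γ ∧ (c s).1 + (c s).2 = s := by
    intro s hs
    have h := hex s hs
    simp only [hc, dif_pos h]
    exact h.choose_spec
  have hmono : ∀ s ∈ Icc sp sq, ∀ s' ∈ Icc sp sq, s ≤ s' →
      (c s).1 ≤ (c s').1 ∧ (c s).2 ≤ (c s').2 ∧
        (c s').1 - (c s).1 ≤ s' - s ∧ (c s').2 - (c s).2 ≤ s' - s := by
    intro s hs s' hs' hss
    obtain ⟨h1, h2⟩ := hmem s hs
    obtain ⟨h1', h2'⟩ := hmem s' hs'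
    have := hγ.order h1 h1' (by rw [h2, h2']; exact hss)
    exact ⟨this.1, this.2, by linarith, by linarith⟩
  have hcp : c sp = p := hγ.eq_of_sum_eq (hmem sp ⟨le_rfl, hpq⟩).1 hp (hmem sp ⟨le_rfl, hpq⟩).2
  have hcq : c sq = q := hγ.eq_of_sum_eq (hmem sq ⟨hpq, le_rfl⟩).1 hq (hmem sq ⟨hpq, le_rfl⟩).2
  refine ⟨c, hmem, hcp, hcq, hmono, ?_⟩
  rw [Metric.continuousOn_iff]
  intro b hb δ hδ
  refine ⟨δ, hδ, fun a ha hab => ?_⟩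
  have key : dist (c a) (c b) ≤ dist a b := by
    rcases le_total a b with h | h
    · obtain ⟨e1, e2, e3, e4⟩ := hmono a ha b hb h
      rw [Prod.dist_eq, Real.dist_eq, Real.dist_eq, Real.dist_eq]
      rw [abs_of_nonpos (by linarith), abs_of_nonpos (by linarith), abs_of_nonpos (by linarith)]
      apply max_le <;> linarith
    · obtain ⟨e1, e2, e3, e4⟩ := hmono b hb a ha h
      rw [Prod.dist_eq, Real.dist_eq, Real.dist_eq, Real.dist_eq]
      rw [abs_of_nonneg (by linarith), abs_of_nonneg (by linarith), abs_of_nonneg (by linarith)]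
      apply max_le <;> linarith
  linarith

end Path
section Limit

open Filter Topology

variable {m n : ℕ} {Dε : Set (ℝ × ℝ)}

lemma continuousOn_of_monlip {c : ℝ → ℝ × ℝ} {a b : ℝ}
    (h : ∀ s ∈ Icc a b, ∀ s' ∈ Icc a b, s ≤ s' →
      (c s).1 ≤ (c s').1 ∧ (c s).2 ≤ (c s').2 ∧
        (c s').1 - (c s).1 ≤ s' - s ∧ (c s').2 - (c s).2 ≤ s' - s) :
    ContinuousOn c (Icc a b) := by
  rw [Metric.continuousOn_iff]
  intro w hw δ hδ
  refine ⟨δ, hδ, fun v hv hvw => ?_⟩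
  have key : dist (c v) (c w) ≤ dist v w := by
    rcases le_total v w with hle | hle
    · obtain ⟨e1, e2, e3, e4⟩ := h v hv w hw hle
      rw [Prod.dist_eq, Real.dist_eq, Real.dist_eq, Real.dist_eq]
      rw [abs_of_nonpos (by linarith), abs_of_nonpos (by linarith), abs_of_nonpos (by linarith)]
      apply max_le <;> linarith
    · obtain ⟨e1, e2, e3, e4⟩ := h w hw v hv hle
      rw [Prod.dist_eq, Real.dist_eq, Real.dist_eq, Real.dist_eq]
      rw [abs_of_nonneg (by linarith), abs_of_nonneg (by linarith), abs_of_nonneg (by linarith)]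
      apply max_le <;> linarith
  linarith

lemma mem_Dfull_of_mem {r : ℝ × ℝ} (hDb : Dε ⊆ Dfull m n) (hr : r ∈ Dε) :
    0 ≤ r.1 ∧ r.1 ≤ 2*(m:ℝ) ∧ 0 ≤ r.2 ∧ r.2 ≤ (n:ℝ) := by
  have := hDb hr
  rw [mem_Dfull_iff] at this
  exact ⟨this.1.1, this.1.2, this.2.1, this.2.2⟩

/-- Reachability is closed under limits of both endpoints. -/
lemma reach_limit (hDk : IsCompact Dε) (hDb : Dε ⊆ Dfull m n)
    (pj qj : ℕ → ℝ × ℝ) (pl ql : ℝ × ℝ)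
    (hpt : Tendsto pj atTop (𝓝 pl)) (hqt : Tendsto qj atTop (𝓝 ql))
    (hr : ∀ j, Reach Dε (pj j) (qj j))
    (hs : ∀ j, (pj j).1 + (pj j).2 ≤ (qj j).1 + (qj j).2) :
    Reach Dε pl ql := by
  classical
  set L : ℝ := 2*(m:ℝ) + (n:ℝ) with hL
  have hL0 : (0:ℝ) ≤ L := by positivity
  -- extract clamped parametrized curves
  have hcur : ∀ j, ∃ c : ℝ → ℝ × ℝ,
      (∀ s, c s ∈ Dε) ∧ c 0 = pj j ∧ c L = qj j ∧
      (∀ s s', s ≤ s' →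
        (c s).1 ≤ (c s').1 ∧ (c s).2 ≤ (c s').2 ∧
          (c s').1 - (c s).1 ≤ s' - s ∧ (c s').2 - (c s).2 ≤ s' - s) := by
    intro j
    obtain ⟨γ, hγ, hpγ, hqγ⟩ := hr j
    obtain ⟨c, hmem, hcp, hcq, hmono, -⟩ := hγ.exists_curve hpγ hqγ (hs j)
    set sp := (pj j).1 + (pj j).2 with hsp
    set sq := (qj j).1 + (qj j).2 with hsq
    obtain ⟨b1, b2, b3, b4⟩ := mem_Dfull_of_mem hDb (hγ.1 hpγ)
    obtain ⟨d1, d2, d3, d4⟩ := mem_Dfull_of_mem hDb (hγ.1 hqγ)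
    have hsp0 : 0 ≤ sp := by rw [hsp]; linarith
    have hsq0 : 0 ≤ sq := by rw [hsq]; linarith
    have hsqL : sq ≤ L := by rw [hsq, hL]; linarith
    have hspq : sp ≤ sq := hs j
    set cl : ℝ → ℝ := fun s => max sp (min s sq) with hcl
    have hclmem : ∀ s, cl s ∈ Icc sp sq :=
      fun s => ⟨le_max_left _ _, max_le hspq (min_le_right _ _)⟩
    have hclmono : ∀ s s', s ≤ s' → cl s ≤ cl s' ∧ cl s' - cl s ≤ s' - s := by
      intro s s' hss
      refine ⟨max_le_max le_rfl (min_le_min hss le_rfl), ?_⟩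
      have k1 : min s' sq ≤ min s sq + (s' - s) := by
        rcases le_total s sq with h | h
        · rw [min_eq_left h]; exact le_trans (min_le_left _ _) (by linarith)
        · rw [min_eq_right h]; exact le_trans (min_le_right _ _) (by linarith)
      have k2 : cl s' ≤ max sp (min s sq + (s' - s)) := max_le_max le_rfl k1
      have k3 : max sp (min s sq + (s' - s)) ≤ cl s + (s' - s) := by
        apply max_le
        · exact le_trans (le_max_left sp (min s sq)) (by linarith)
        · exact add_le_add_left (le_max_right _ _) _
      linarith
    have hcl0 : cl 0 = sp := by
      rw [hcl]
      simp only []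
      rw [min_eq_left hsq0, max_eq_left hsp0]
    have hclL : cl L = sq := by
      rw [hcl]
      simp only []
      rw [min_eq_right hsqL, max_eq_right hspq]
    refine ⟨fun s => c (cl s), ?_, ?_, ?_, ?_⟩
    · intro s; exact hγ.1 (hmem (cl s) (hclmem s)).1
    · show c (cl 0) = pj j
      rw [hcl0, hcp]
    · show c (cl L) = qj j
      rw [hclL, hcq]
    · intro s s' hss
      obtain ⟨e1, e2⟩ := hclmono s s' hss
      obtain ⟨f1, f2, f3, f4⟩ := hmono (cl s) (hclmem s) (cl s') (hclmem s') e1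
      exact ⟨f1, f2, by linarith, by linarith⟩
  choose c hcD hc0 hcL hcml using hcur
  -- take a limit along an ultrafilter extending atTop
  set U : Ultrafilter ℕ := Ultrafilter.of atTop with hU
  have hUle : (U : Filter ℕ) ≤ atTop := Ultrafilter.of_le _
  have hlim : ∀ s : ℝ, ∃ z ∈ Dε, Tendsto (fun j => c j s) U (𝓝 z) := by
    intro s
    have hle : (U.map fun j => c j s : Filter (ℝ × ℝ)) ≤ 𝓟 Dε := by
      rw [le_principal_iff]
      exact Filter.mem_map.2 (Filter.univ_mem' fun j => hcD j s)
    obtain ⟨z, hzD, hz⟩ := hDk.ultrafilter_le_nhds (U.map fun j => c j s) hle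
    exact ⟨z, hzD, hz⟩
  choose z hzD hzt using hlim
  have hz0 : z 0 = pl := by
    refine tendsto_nhds_unique (hzt 0) ?_
    have : Tendsto (fun j => c j 0) atTop (𝓝 pl) := by
      have : (fun j => c j 0) = pj := funext fun j => hc0 j
      rw [this]; exact hpt
    exact this.mono_left hUle
  have hzL : z L = ql := by
    refine tendsto_nhds_unique (hzt L) ?_
    have : Tendsto (fun j => c j L) atTop (𝓝 ql) := by
      have : (fun j => c j L) = qj := funext fun j => hcL j
      rw [this]; exact hqt
    exact this.mono_left hUle
  have hzml : ∀ s s', s ≤ s' →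
      (z s).1 ≤ (z s').1 ∧ (z s).2 ≤ (z s').2 ∧
        (z s').1 - (z s).1 ≤ s' - s ∧ (z s').2 - (z s).2 ≤ s' - s := by
    intro s s' hss
    have t1 : Tendsto (fun j => (c j s).1) U (𝓝 (z s).1) :=
      (continuous_fst.tendsto _).comp (hzt s)
    have t2 : Tendsto (fun j => (c j s).2) U (𝓝 (z s).2) :=
      (continuous_snd.tendsto _).comp (hzt s)
    have t1' : Tendsto (fun j => (c j s').1) U (𝓝 (z s').1) :=
      (continuous_fst.tendsto _).comp (hzt s')
    have t2' : Tendsto (fun j => (c j s').2) U (𝓝 (z s').2) :=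
      (continuous_snd.tendsto _).comp (hzt s')
    refine ⟨le_of_tendsto_of_tendsto' t1 t1' fun j => (hcml j s s' hss).1,
      le_of_tendsto_of_tendsto' t2 t2' fun j => (hcml j s s' hss).2.1, ?_, ?_⟩
    · exact le_of_tendsto (t1'.sub t1) (Eventually.of_forall fun j => (hcml j s s' hss).2.2.1)
    · exact le_of_tendsto (t2'.sub t2) (Eventually.of_forall fun j => (hcml j s s' hss).2.2.2)
  -- build the limit path
  refine ⟨z '' Icc 0 L, ⟨?_, ?_, ?_⟩, ⟨0, ⟨le_rfl, hL0⟩, hz0⟩, ⟨L, ⟨hL0, le_rfl⟩, hzL⟩⟩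
  · rintro r ⟨s, -, rfl⟩; exact hzD s
  · exact (isConnected_Icc hL0).image z
      (continuousOn_of_monlip fun s hs s' hs' hss => hzml s s' hss)
  · rintro r ⟨s, -, rfl⟩ r' ⟨s', -, rfl⟩
    rcases le_total s s' with h | h
    · obtain ⟨e1, e2, -, -⟩ := hzml s s' h
      nlinarith [e1, e2]
    · obtain ⟨e1, e2, -, -⟩ := hzml s' s h
      nlinarith [e1, e2]

end Limit
section Cross

open Filter Topology

variable {m n : ℕ} {Dε : Set (ℝ × ℝ)}

lemma Reach.symm {p q : ℝ × ℝ} (h : Reach Dε p q) : Reach Dε q p := by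
  obtain ⟨γ, hγ, hp, hq⟩ := h
  exact ⟨γ, hγ, hq, hp⟩

lemma reach_sSup_of_le (hDk : IsCompact Dε) (hDb : Dε ⊆ Dfull m n) (p : ℝ × ℝ) (c0 : ℝ)
    (hS : {a : ℝ | a ∈ Icc (0:ℝ) (2*(m:ℝ)) ∧ Reach Dε p (a, c0)}.Nonempty)
    (hor : ∀ a ∈ {a : ℝ | a ∈ Icc (0:ℝ) (2*(m:ℝ)) ∧ Reach Dε p (a, c0)},
      p.1 + p.2 ≤ a + c0) :
    sSup {a : ℝ | a ∈ Icc (0:ℝ) (2*(m:ℝ)) ∧ Reach Dε p (a, c0)}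
      ∈ {a : ℝ | a ∈ Icc (0:ℝ) (2*(m:ℝ)) ∧ Reach Dε p (a, c0)} := by
  set S := {a : ℝ | a ∈ Icc (0:ℝ) (2*(m:ℝ)) ∧ Reach Dε p (a, c0)} with hSdef
  have hbdd : BddAbove S := BddAbove.mono (fun a ha => ha.1) bddAbove_Icc
  obtain ⟨a, hamono, hat, haS⟩ := exists_seq_tendsto_sSup hS hbdd
  have h01 : 0 ≤ sSup S := le_csSup hbdd (haS 0) |>.trans' (haS 0).1.1
  have h02 : sSup S ≤ 2*(m:ℝ) := csSup_le hS fun b hb => hb.1.2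
  refine ⟨⟨h01, h02⟩, ?_⟩
  exact reach_limit hDk hDb (fun _ => p) (fun j => (a j, c0)) p (sSup S, c0)
    tendsto_const_nhds (hat.prodMk_nhds tendsto_const_nhds)
    (fun j => (haS j).2) (fun j => hor (a j) (haS j))

lemma reach_sSup_of_ge (hDk : IsCompact Dε) (hDb : Dε ⊆ Dfull m n) (p : ℝ × ℝ) (c0 : ℝ)
    (hS : {a : ℝ | a ∈ Icc (0:ℝ) (2*(m:ℝ)) ∧ Reach Dε p (a, c0)}.Nonempty)
    (hor : ∀ a ∈ {a : ℝ | a ∈ Icc (0:ℝ) (2*(m:ℝ)) ∧ Reach Dε p (a, c0)},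
      a + c0 ≤ p.1 + p.2) :
    sSup {a : ℝ | a ∈ Icc (0:ℝ) (2*(m:ℝ)) ∧ Reach Dε p (a, c0)}
      ∈ {a : ℝ | a ∈ Icc (0:ℝ) (2*(m:ℝ)) ∧ Reach Dε p (a, c0)} := by
  set S := {a : ℝ | a ∈ Icc (0:ℝ) (2*(m:ℝ)) ∧ Reach Dε p (a, c0)} with hSdef
  have hbdd : BddAbove S := BddAbove.mono (fun a ha => ha.1) bddAbove_Icc
  obtain ⟨a, hamono, hat, haS⟩ := exists_seq_tendsto_sSup hS hbdd
  have h01 : 0 ≤ sSup S := le_csSup hbdd (haS 0) |>.trans' (haS 0).1.1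
  have h02 : sSup S ≤ 2*(m:ℝ) := csSup_le hS fun b hb => hb.1.2
  refine ⟨⟨h01, h02⟩, Reach.symm ?_⟩
  exact reach_limit hDk hDb (fun j => (a j, c0)) (fun _ => p) (sSup S, c0) p
    (hat.prodMk_nhds tendsto_const_nhds) tendsto_const_nhds
    (fun j => ((haS j).2).symm) (fun j => hor (a j) (haS j))

/-- From the four reachability conditions, produce a monotone path from `(u,0)` to `(u+m,n)`. -/
lemma exists_path_of_conditions (hm : 1 ≤ m) (hn : 1 ≤ n)
    (hDk : IsCompact Dε) (hDb : Dε ⊆ Dfull m n)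
    {u : ℝ} (hu : u ∈ Icc (0:ℝ) (m:ℝ))
    (h1 : (u, (0:ℝ)) ∈ gUp m n Dε) (h2 : (u + m, (n:ℝ)) ∈ gDown m Dε)
    (h3 : u + m ≤ rUp m n Dε (u, (0:ℝ))) (h4 : u ≤ rDown m Dε (u + m, (n:ℝ))) :
    ∃ γ, IsMonPath Dε γ ∧ (u, (0:ℝ)) ∈ γ ∧ (u + m, (n:ℝ)) ∈ γ := by
  have hn0 : (0:ℝ) < n := by exact_mod_cast hn
  have hm0 : (0:ℝ) < m := by exact_mod_cast hm
  -- the top-reachable set from (u,0)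
  set ST := {a : ℝ | a ∈ Icc (0:ℝ) (2*(m:ℝ)) ∧ Reach Dε (u, (0:ℝ)) (a, (n:ℝ))} with hSTdef
  have hSTne : ST.Nonempty := by
    obtain ⟨-, q, hqT, hreach⟩ := h1
    obtain ⟨hq1, hq2⟩ := hqT
    refine ⟨q.1, hq1, ?_⟩
    have : q = (q.1, (n:ℝ)) := Prod.ext rfl hq2
    rwa [← this]
  have hSTor : ∀ a ∈ ST, u + (0:ℝ) ≤ a + n := by
    rintro a ⟨-, γ, hγ, hp, hq⟩
    have hc := hγ.2.2 _ hp _ hq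
    simp only at hc
    nlinarith
  have hAmem := reach_sSup_of_le hDk hDb (u, (0:ℝ)) (n:ℝ) hSTne hSTor
  set A := sSup ST with hA
  have hAum : u + m ≤ A := h3
  -- the bottom-reachable set from (u+m,n)
  set SB := {a : ℝ | a ∈ Icc (0:ℝ) (2*(m:ℝ)) ∧ Reach Dε (u + m, (n:ℝ)) (a, (0:ℝ))} with hSBdef
  have hSBne : SB.Nonempty := by
    obtain ⟨-, q, hqB, hreach⟩ := h2
    obtain ⟨hq1, hq2⟩ := hqB
    refine ⟨q.1, hq1, ?_⟩
    have : q = (q.1, (0:ℝ)) := Prod.ext rfl hq2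
    rwa [← this]
  have hSBor : ∀ a ∈ SB, a + (0:ℝ) ≤ (u + m) + n := by
    rintro a ⟨-, γ, hγ, hp, hq⟩
    have hc := hγ.2.2 _ hp _ hq
    simp only at hc
    nlinarith
  have hSBle : ∀ a ∈ SB, a ≤ u + m := by
    rintro a ⟨-, γ, hγ, hp, hq⟩
    have hc := hγ.2.2 _ hp _ hq
    simp only at hc
    nlinarith
  have hBmem := reach_sSup_of_ge hDk hDb (u + m, (n:ℝ)) (0:ℝ) hSBne hSBor
  set B := sSup SB with hB
  have hBu : u ≤ B := by
    have : rDown m Dε (u + m, (n:ℝ)) = sSup SB := by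
      rw [rDown, if_neg (by simp only; positivity)]
    rwa [this] at h4
  have hBum : B ≤ u + m := hSBle B hBmem
  -- curves
  obtain ⟨γ1, hγ1, hp1, hq1⟩ := hAmem.2
  obtain ⟨c1, hm1, hcp1, hcq1, hmono1, hcont1⟩ :=
    hγ1.exists_curve hp1 hq1 (by simp only; linarith)
  simp only [add_zero] at hm1 hcp1 hcq1 hmono1 hcont1
  obtain ⟨γ2, hγ2, hq2', hp2⟩ := hBmem.2
  obtain ⟨c2, hm2, hcp2, hcq2, hmono2, hcont2⟩ :=
    hγ2.exists_curve hp2 hq2' (by simp only; linarith)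
  simp only [add_zero] at hm2 hcp2 hcq2 hmono2 hcont2
  -- c1 : [u, A+n] with c1 u = (u,0), c1 (A+n) = (A,n)
  -- c2 : [B, u+m+n] with c2 B = (B,0), c2 (u+m+n) = (u+m,n)
  have hsub : Icc B (u + m + (n:ℝ)) ⊆ Icc u (A + n) :=
    Icc_subset_Icc hBu (by linarith)
  -- find crossing point
  have hIVT : ∃ s ∈ Icc B (u + m + (n:ℝ)), (c1 s).2 - (c2 s).2 = 0 := by
    have hcont : ContinuousOn (fun s => (c1 s).2 - (c2 s).2) (Icc B (u + m + (n:ℝ))) :=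
      ((continuous_snd.comp_continuousOn (hcont1.mono hsub)).sub
        (continuous_snd.comp_continuousOn hcont2))
    have hBle : B ≤ u + m + (n:ℝ) := by linarith
    have hv1 : (0:ℝ) ≤ (c1 B).2 := by
      have := mem_Dfull_of_mem hDb (hγ1.1 (hm1 B (hsub ⟨le_rfl, hBle⟩)).1)
      exact this.2.2.1
    have hv2 : (c1 (u + m + (n:ℝ))).2 ≤ n := by
      have := mem_Dfull_of_mem hDb (hγ1.1 (hm1 _ (hsub ⟨hBle, le_rfl⟩)).1)
      exact this.2.2.2
    have he1 : (fun s => (c1 s).2 - (c2 s).2) B ≥ 0 := by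
      simp only [hcp2]
      simpa using hv1
    have he2 : (fun s => (c1 s).2 - (c2 s).2) (u + m + (n:ℝ)) ≤ 0 := by
      simp only [hcq2]
      simpa using by linarith
    have := intermediate_value_Icc' hBle hcont
    have h0mem : (0:ℝ) ∈ Icc ((fun s => (c1 s).2 - (c2 s).2) (u + m + (n:ℝ)))
        ((fun s => (c1 s).2 - (c2 s).2) B) := ⟨he2, he1⟩
    obtain ⟨s, hs, hs0⟩ := this h0mem
    exact ⟨s, hs, hs0⟩
  obtain ⟨s, hsmem, hs0⟩ := hIVT
  have hs1mem : s ∈ Icc u (A + n) := hsub hsmem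
  have hcross : c1 s = c2 s := by
    have e1 := (hm1 s hs1mem).2
    have e2 := (hm2 s hsmem).2
    have e3 : (c1 s).2 = (c2 s).2 := by linarith
    exact Prod.ext (by linarith) e3
  -- glue
  refine ⟨c1 '' Icc u s ∪ c2 '' Icc s (u + m + (n:ℝ)), ⟨?_, ?_, ?_⟩, ?_, ?_⟩
  · rintro r (⟨σ, hσ, rfl⟩ | ⟨σ, hσ, rfl⟩)
    · exact hγ1.1 (hm1 σ (Icc_subset_Icc le_rfl hs1mem.2 hσ)).1
    · exact hγ2.1 (hm2 σ (Icc_subset_Icc hsmem.1 le_rfl hσ)).1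
  · apply IsConnected.union
    · exact ⟨c1 s, ⟨s, ⟨hsmem.1.trans' hBu, le_rfl⟩, rfl⟩, by rw [hcross]; exact ⟨s, ⟨le_rfl, hsmem.2⟩, rfl⟩⟩
    · exact (isConnected_Icc (hsmem.1.trans' hBu)).image c1
        (hcont1.mono (Icc_subset_Icc le_rfl hs1mem.2))
    · exact (isConnected_Icc hsmem.2).image c2
        (hcont2.mono (Icc_subset_Icc hsmem.1 le_rfl))
  · have key1 : ∀ σ ∈ Icc u s, (c1 σ).1 ≤ (c1 s).1 ∧ (c1 σ).2 ≤ (c1 s).2 := by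
      intro σ hσ
      have := hmono1 σ (Icc_subset_Icc le_rfl hs1mem.2 hσ) s hs1mem hσ.2
      exact ⟨this.1, this.2.1⟩
    have key2 : ∀ σ ∈ Icc s (u + m + (n:ℝ)), (c2 s).1 ≤ (c2 σ).1 ∧ (c2 s).2 ≤ (c2 σ).2 := by
      intro σ hσ
      have := hmono2 s hsmem σ (Icc_subset_Icc hsmem.1 le_rfl hσ) hσ.1
      exact ⟨this.1, this.2.1⟩
    rintro r (⟨σ, hσ, rfl⟩ | ⟨σ, hσ, rfl⟩) r' (⟨σ', hσ', rfl⟩ | ⟨σ', hσ', rfl⟩)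
    · rcases le_total σ σ' with h | h
      · have := hmono1 σ (Icc_subset_Icc le_rfl hs1mem.2 hσ) σ'
          (Icc_subset_Icc le_rfl hs1mem.2 hσ') h
        nlinarith [this.1, this.2.1]
      · have := hmono1 σ' (Icc_subset_Icc le_rfl hs1mem.2 hσ') σ
          (Icc_subset_Icc le_rfl hs1mem.2 hσ) h
        nlinarith [this.1, this.2.1]
    · have k1 := key1 σ hσ
      have k2 := key2 σ' hσ'
      rw [hcross] at k1
      nlinarith [k1.1, k1.2, k2.1, k2.2]
    · have k1 := key1 σ' hσ'
      have k2 := key2 σ hσ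
      rw [hcross] at k1
      nlinarith [k1.1, k1.2, k2.1, k2.2]
    · rcases le_total σ σ' with h | h
      · have := hmono2 σ (Icc_subset_Icc hsmem.1 le_rfl hσ) σ'
          (Icc_subset_Icc hsmem.1 le_rfl hσ') h
        nlinarith [this.1, this.2.1]
      · have := hmono2 σ' (Icc_subset_Icc hsmem.1 le_rfl hσ') σ
          (Icc_subset_Icc hsmem.1 le_rfl hσ) h
        nlinarith [this.1, this.2.1]
  · exact Or.inl ⟨u, ⟨le_rfl, hsmem.1.trans' hBu⟩, hcp1⟩
  · exact Or.inr ⟨u + m + (n:ℝ), ⟨hsmem.2, le_rfl⟩, hcq2⟩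

end Cross
section PathToReparam

variable {k m n : ℕ} {x y : ℕ → EuclideanSpace ℝ (Fin k)} {ε : ℝ}

lemma reparams_of_path (hm : 1 ≤ m) (hn : 1 ≤ n)
    {u : ℝ} (hu : u ∈ Icc (0:ℝ) (m:ℝ)) {γ : Set (ℝ × ℝ)}
    (hγ : IsMonPath (Dfree m n x y ε) γ)
    (hpγ : (u, (0:ℝ)) ∈ γ) (hqγ : (u + m, (n:ℝ)) ∈ γ) :
    ∃ φX φY : ℝ → EuclideanSpace ℝ (Fin k),
      IsReparam m x φX ∧ IsReparam n y φY ∧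
      ∀ t ∈ Icc (0:ℝ) 1, dist (φX t) (φY t) ≤ ε := by
  have hn0 : (0:ℝ) < n := by exact_mod_cast hn
  have hm0 : (0:ℝ) < m := by exact_mod_cast hm
  obtain ⟨c, hmem, hcp, hcq, hmono, hcont⟩ :=
    hγ.exists_curve hpγ hqγ (by simp only; linarith)
  simp only [add_zero] at hmem hcp hcq hmono hcont
  set par : ℝ → ℝ := fun t => u + ((m:ℝ) + n) * t with hpar
  have hparmaps : ∀ t ∈ Icc (0:ℝ) 1, par t ∈ Icc u (u + m + (n:ℝ)) := by
    intro t ht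
    constructor
    · simp only [hpar]; nlinarith [ht.1]
    · simp only [hpar]; nlinarith [ht.2]
  have hpar0 : par 0 = u := by simp [hpar]
  have hpar1 : par 1 = u + m + (n:ℝ) := by simp [hpar]; ring
  have hrange : ∀ s ∈ Icc u (u + m + (n:ℝ)),
      u ≤ (c s).1 ∧ (c s).1 ≤ u + m ∧ 0 ≤ (c s).2 ∧ (c s).2 ≤ n := by
    intro s hs
    have hlow := hmono u ⟨le_rfl, by linarith⟩ s hs hs.1
    have hhigh := hmono s hs (u + m + (n:ℝ)) ⟨by linarith, le_rfl⟩ hs.2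
    rw [hcp] at hlow
    rw [hcq] at hhigh
    exact ⟨hlow.1, hhigh.1, hlow.2.1, hhigh.2.1⟩
  set wX : ℝ → ℝ := fun t => (c (par t)).1 - u with hwX
  set wY : ℝ → ℝ := fun t => (c (par t)).2 with hwY
  have hparc : Continuous par := by
    apply Continuous.add continuous_const
    exact continuous_const.mul continuous_id
  have hccomp : ContinuousOn (fun t => c (par t)) (Icc (0:ℝ) 1) :=
    hcont.comp hparc.continuousOn hparmaps
  have hparmono : ∀ t ∈ Icc (0:ℝ) 1, ∀ t' ∈ Icc (0:ℝ) 1, t ≤ t' → par t ≤ par t' := by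
    intro t ht t' ht' htt
    simp only [hpar]
    nlinarith
  refine ⟨fun t => fCurve x (cshift m u (wX t)), fun t => fCurve y (cshift n 0 (wY t)),
    ⟨wX, u, hu, ⟨?_, ?_, ?_, ?_, ?_⟩, fun t _ => rfl⟩,
    ⟨wY, 0, ⟨le_rfl, by positivity⟩, ⟨?_, ?_, ?_, ?_, ?_⟩, fun t _ => rfl⟩, ?_⟩
  · exact (continuous_fst.comp_continuousOn hccomp).sub continuousOn_const
  · intro t ht t' ht' htt
    have := (hmono (par t) (hparmaps t ht) (par t') (hparmaps t' ht')
      (hparmono t ht t' ht' htt)).1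
    simp only [hwX]
    linarith
  · intro t ht
    have := hrange (par t) (hparmaps t ht)
    exact ⟨by simp only [hwX]; linarith [this.1], by simp only [hwX]; linarith [this.2.1]⟩
  · simp only [hwX, hpar0, hcp, sub_self]
  · simp only [hwX, hpar1, hcq]; ring_nf
  · exact continuous_snd.comp_continuousOn hccomp
  · intro t ht t' ht' htt
    have := (hmono (par t) (hparmaps t ht) (par t') (hparmaps t' ht')
      (hparmono t ht t' ht' htt)).2.1
    simpa only [hwY] using this
  · intro t ht
    have := hrange (par t) (hparmaps t ht)
    exact ⟨this.2.2.1, this.2.2.2⟩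
  · simp only [hwY, hpar0, hcp]
  · simp only [hwY, hpar1, hcq]
  · intro t ht
    have hsm := hparmaps t ht
    have hmemD : c (par t) ∈ Dfree m n x y ε := hγ.1 (hmem (par t) hsm).1
    have hdist := hmemD.2
    have hr := hrange (par t) hsm
    have e1 : fCurve x (cshift m u (wX t)) = fCurveExt m x ((c (par t)).1) := by
      rw [← fCurveExt_cshift m x u (wX t)]
      congr 1
      simp only [hwX]
      ring
    have e2 : fCurve y (cshift n 0 (wY t)) = fCurve y ((c (par t)).2) := by
      congr 1
      rw [cshift, if_pos (by simp only [hwY, add_zero]; exact hr.2.2.2)]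
      simp only [hwY, add_zero]
    show dist (fCurve x (cshift m u (wX t))) (fCurve y (cshift n 0 (wY t))) ≤ ε
    rw [e1, e2]
    exact hdist

end PathToReparam
section Forward

variable {k m n : ℕ} {x y : ℕ → EuclideanSpace ℝ (Fin k)} {ε : ℝ}

lemma conditions_of_path (hm : 1 ≤ m) (hn : 1 ≤ n) {Dε : Set (ℝ × ℝ)}
    {u : ℝ} (hu : u ∈ Icc (0:ℝ) (m:ℝ)) {γ : Set (ℝ × ℝ)}
    (hγ : IsMonPath Dε γ) (hpγ : (u, (0:ℝ)) ∈ γ) (hqγ : (u + m, (n:ℝ)) ∈ γ) :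
    (u, (0:ℝ)) ∈ gUp m n Dε ∧ (u + m, (n:ℝ)) ∈ gDown m Dε ∧
      u + m ≤ rUp m n Dε (u, (0:ℝ)) ∧ u ≤ rDown m Dε (u + m, (n:ℝ)) := by
  have hm0 : (0:ℝ) < m := by exact_mod_cast hm
  have hn0 : (0:ℝ) < n := by exact_mod_cast hn
  have humem : u + m ∈ Icc (0:ℝ) (2*(m:ℝ)) := ⟨by linarith [hu.1], by linarith [hu.2]⟩
  have humem' : u ∈ Icc (0:ℝ) (2*(m:ℝ)) := ⟨hu.1, by linarith [hu.2]⟩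
  have hreach : Reach Dε (u, (0:ℝ)) (u + m, (n:ℝ)) := ⟨γ, hγ, hpγ, hqγ⟩
  refine ⟨⟨hγ.1 hpγ, (u + m, (n:ℝ)), ⟨humem, rfl⟩, hreach⟩,
    ⟨hγ.1 hqγ, (u, (0:ℝ)), ⟨humem', rfl⟩, hreach.symm⟩, ?_, ?_⟩
  · apply le_csSup
    · exact BddAbove.mono (fun a ha => ha.1) bddAbove_Icc
    · exact ⟨humem, hreach⟩
  · rw [rDown, if_neg (by simp only; positivity)]
    apply le_csSup
    · exact BddAbove.mono (fun a ha => ha.1) bddAbove_Icc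
    · exact ⟨humem', hreach.symm⟩

lemma path_of_reparams (hm : 1 ≤ m) (hn : 1 ≤ n) (hx : x m = x 0) (hy : y n = y 0)
    {φX φY : ℝ → EuclideanSpace ℝ (Fin k)}
    (hX : IsReparam m x φX) (hY : IsReparam n y φY)
    (hd : ∀ t ∈ Icc (0:ℝ) 1, dist (φX t) (φY t) ≤ ε) :
    ∃ u ∈ Icc (0:ℝ) (m:ℝ), ∃ γ, IsMonPath (Dfree m n x y ε) γ ∧
      (u, (0:ℝ)) ∈ γ ∧ (u + m, (n:ℝ)) ∈ γ := by
  classical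
  have hm0 : (0:ℝ) < m := by exact_mod_cast hm
  have hn0 : (0:ℝ) < n := by exact_mod_cast hn
  obtain ⟨wX, τX, hτX, ⟨hXc, hXm, hXb, hX0, hX1⟩, hφX⟩ := hX
  obtain ⟨wY, τY, hτY, ⟨hYc, hYm, hYb, hY0, hY1⟩, hφY⟩ := hY
  set W : ℝ → ℝ := fun t => wX t + τX with hW
  set V : ℝ → ℝ := fun t => wY t + τY with hV
  have hWc : ContinuousOn W (Icc (0:ℝ) 1) := hXc.add continuousOn_const
  have hVc : ContinuousOn V (Icc (0:ℝ) 1) := hYc.add continuousOn_const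
  have hWm : ∀ t ∈ Icc (0:ℝ) 1, ∀ t' ∈ Icc (0:ℝ) 1, t ≤ t' → W t ≤ W t' := by
    intro t ht t' ht' h
    simp only [hW]
    exact add_le_add_left (hXm ht ht' h) _
  have hVm : ∀ t ∈ Icc (0:ℝ) 1, ∀ t' ∈ Icc (0:ℝ) 1, t ≤ t' → V t ≤ V t' := by
    intro t ht t' ht' h
    simp only [hV]
    exact add_le_add_left (hYm ht ht' h) _
  have hWb' : ∀ t ∈ Icc (0:ℝ) 1, τX ≤ W t ∧ W t ≤ (m:ℝ) + τX := by
    intro t ht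
    have := hXb t ht
    exact ⟨by simp only [hW]; linarith [this.1], by simp only [hW]; linarith [this.2]⟩
  have hVb' : ∀ t ∈ Icc (0:ℝ) 1, τY ≤ V t ∧ V t ≤ (n:ℝ) + τY := by
    intro t ht
    have := hYb t ht
    exact ⟨by simp only [hV]; linarith [this.1], by simp only [hV]; linarith [this.2]⟩
  have hV0 : V 0 = τY := by simp [hV, hY0]
  have hV1 : V 1 = (n:ℝ) + τY := by simp [hV, hY1]
  have hW0 : W 0 = τX := by simp [hW, hX0]
  have hW1 : W 1 = (m:ℝ) + τX := by simp [hW, hX1]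
  -- find the wrap time of Y
  have hIVT : ∃ t ∈ Icc (0:ℝ) 1, V t = n := by
    have := intermediate_value_Icc (by norm_num : (0:ℝ) ≤ 1) hVc
    have hnmem : (n:ℝ) ∈ Icc (V 0) (V 1) := by
      rw [hV0, hV1]
      exact ⟨hτY.2, by linarith [hτY.1]⟩
    obtain ⟨t, ht, hVt⟩ := this hnmem
    exact ⟨t, ht, hVt⟩
  obtain ⟨ts, hts, hVts⟩ := hIVT
  set Us := W ts with hUs
  have hUsb : τX ≤ Us ∧ Us ≤ (m:ℝ) + τX := hWb' ts hts
  set u : ℝ := if Us ≤ m then Us else Us - m with hudef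
  have hu : u ∈ Icc (0:ℝ) (m:ℝ) := by
    rw [hudef]
    split_ifs with h
    · exact ⟨by linarith [hUsb.1, hτX.1], h⟩
    · exact ⟨by linarith, by linarith [hUsb.2, hτX.2]⟩
  -- the value of fCurveExt is unchanged by the shift
  have hφXval : ∀ t ∈ Icc (0:ℝ) 1, fCurveExt m x (W t) = φX t := by
    intro t ht
    rw [hφX t ht]
    exact fCurveExt_cshift m x τX (wX t)
  have keyX1 : ∀ t ∈ Icc ts 1, fCurveExt m x (W t + (u - Us)) = φX t := by
    intro t ht
    have ht01 : t ∈ Icc (0:ℝ) 1 := ⟨hts.1.trans ht.1, ht.2⟩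
    have hWt : Us ≤ W t := hWm ts hts t ht01 ht.1
    rw [← hφXval t ht01, hudef]
    split_ifs with h
    · norm_num
    · have : fCurveExt m x ((W t - m) + m) = fCurveExt m x (W t - m) := by
        apply fCurveExt_period hx
        · linarith
        · linarith [(hWb' t ht01).2, hτX.2]
      rw [show W t - m + (m:ℝ) = W t by ring] at this
      rw [show W t + (Us - m - Us) = (W t - m) by ring]
      exact this.symm
  have keyX2 : ∀ t ∈ Icc (0:ℝ) ts, fCurveExt m x (W t + (u - Us) + m) = φX t := by
    intro t ht
    have ht01 : t ∈ Icc (0:ℝ) 1 := ⟨ht.1, ht.2.trans hts.2⟩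
    have hWt : W t ≤ Us := hWm t ht01 ts hts ht.2
    rw [← hφXval t ht01, hudef]
    split_ifs with h
    · rw [show W t + (Us - Us) + m = W t + m by ring]
      apply fCurveExt_period hx
      · linarith [(hWb' t ht01).1, hτX.1]
      · linarith
    · norm_num
  -- the value of fCurve y
  have keyY1 : ∀ t ∈ Icc ts 1, fCurve y (V t - n) = φY t := by
    intro t ht
    have ht01 : t ∈ Icc (0:ℝ) 1 := ⟨hts.1.trans ht.1, ht.2⟩
    have hVt : (n:ℝ) ≤ V t := by
      rw [← hVts]
      exact hVm ts hts t ht01 ht.1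
    rcases eq_or_lt_of_le hVt with h | h
    · rw [← h, sub_self]
      rw [hφY t ht01, cshift, if_pos (show wY t + τY ≤ (n:ℝ) from le_of_eq h.symm)]
      have e : wY t + τY = V t := rfl
      rw [e, ← h]
      rw [show (0:ℝ) = ((0:ℕ):ℝ) by simp, fCurve_nat, show ((n:ℝ)) = ((n:ℕ):ℝ) from rfl,
        fCurve_nat, hy]
    · rw [hφY t ht01, cshift, if_neg (show ¬ (wY t + τY ≤ (n:ℝ)) by
        have e : wY t + τY = V t := rfl
        rw [e]; linarith)]
  have keyY2 : ∀ t ∈ Icc (0:ℝ) ts, fCurve y (V t) = φY t := by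
    intro t ht
    have ht01 : t ∈ Icc (0:ℝ) 1 := ⟨ht.1, ht.2.trans hts.2⟩
    have hVtn : V t ≤ n := by
      rw [← hVts]
      exact hVm t ht01 ts hts ht.2
    rw [hφY t ht01]
    congr 1
    rw [cshift, if_pos (show wY t + τY ≤ (n:ℝ) from hVtn)]
  -- the two pieces
  set F1 : ℝ → ℝ × ℝ := fun t => (W t + (u - Us), V t - n) with hF1
  set F2 : ℝ → ℝ × ℝ := fun t => (W t + (u - Us) + m, V t) with hF2
  have hF1mem : ∀ t ∈ Icc ts 1, F1 t ∈ Dfree m n x y ε := by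
    intro t ht
    have ht01 : t ∈ Icc (0:ℝ) 1 := ⟨hts.1.trans ht.1, ht.2⟩
    have hWt : Us ≤ W t := hWm ts hts t ht01 ht.1
    have hVt : (n:ℝ) ≤ V t := by rw [← hVts]; exact hVm ts hts t ht01 ht.1
    have hWtub := (hWb' t ht01).2
    have hVtub := (hVb' t ht01).2
    constructor
    · rw [mem_Dfull_iff]
      refine ⟨⟨?_, ?_⟩, ?_, ?_⟩
      · show (0:ℝ) ≤ W t + (u - Us); linarith [hu.1]
      · show W t + (u - Us) ≤ 2*(m:ℝ)
        rw [hudef]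
        split_ifs with h <;> linarith [hτX.2]
      · show (0:ℝ) ≤ V t - n; linarith
      · show V t - n ≤ (n:ℝ); linarith [hτY.2]
    · show dist (fCurveExt m x (W t + (u - Us))) (fCurve y (V t - n)) ≤ ε
      rw [keyX1 t ht, keyY1 t ht]
      exact hd t ht01
  have hF2mem : ∀ t ∈ Icc (0:ℝ) ts, F2 t ∈ Dfree m n x y ε := by
    intro t ht
    have ht01 : t ∈ Icc (0:ℝ) 1 := ⟨ht.1, ht.2.trans hts.2⟩
    have hWt : W t ≤ Us := hWm t ht01 ts hts ht.2
    have hVtn : V t ≤ n := by rw [← hVts]; exact hVm t ht01 ts hts ht.2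
    have hWtlb := (hWb' t ht01).1
    have hVtlb := (hVb' t ht01).1
    constructor
    · rw [mem_Dfull_iff]
      refine ⟨⟨?_, ?_⟩, ?_, ?_⟩
      · show (0:ℝ) ≤ W t + (u - Us) + m
        rw [hudef]
        split_ifs with h <;> linarith [hτX.1]
      · show W t + (u - Us) + m ≤ 2*(m:ℝ)
        rw [hudef]
        split_ifs with h <;> linarith [hτX.2, hUsb.2]
      · show (0:ℝ) ≤ V t; linarith [hτY.1]
      · show V t ≤ (n:ℝ); exact hVtn
    · show dist (fCurveExt m x (W t + (u - Us) + m)) (fCurve y (V t)) ≤ ε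
      rw [keyX2 t ht, keyY2 t ht]
      exact hd t ht01
  have hprod : ∀ a b : ℝ, a ≤ 0 → b ≤ 0 → a * b ≥ 0 := fun a b ha hb => by nlinarith
  -- glue the two pieces
  refine ⟨u, hu, F1 '' Icc ts 1 ∪ F2 '' Icc (0:ℝ) ts, ⟨?_, ?_, ?_⟩, ?_, ?_⟩
  · rintro r (⟨t, ht, rfl⟩ | ⟨t, ht, rfl⟩)
    · exact hF1mem t ht
    · exact hF2mem t ht
  · have hshare : F1 1 = F2 0 := by
      simp only [hF1, hF2, hW1, hW0, hV1, hV0, Prod.mk.injEq]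
      constructor <;> ring
    apply IsConnected.union
    · refine ⟨F1 1, ⟨1, ⟨hts.2, le_rfl⟩, rfl⟩, ?_⟩
      rw [hshare]
      exact ⟨0, ⟨le_rfl, hts.1⟩, rfl⟩
    · apply (isConnected_Icc hts.2).image
      apply ContinuousOn.prodMk
      · exact ((hWc.mono (Icc_subset_Icc hts.1 le_rfl)).add continuousOn_const)
      · exact ((hVc.mono (Icc_subset_Icc hts.1 le_rfl)).sub continuousOn_const)
    · apply (isConnected_Icc hts.1).image
      apply ContinuousOn.prodMk
      · exact (((hWc.mono (Icc_subset_Icc le_rfl hts.2)).add continuousOn_const).add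
          continuousOn_const)
      · exact (hVc.mono (Icc_subset_Icc le_rfl hts.2))
  · rintro r (⟨t, ht, rfl⟩ | ⟨t, ht, rfl⟩) r' (⟨t', ht', rfl⟩ | ⟨t', ht', rfl⟩)
    · have h01 : t ∈ Icc (0:ℝ) 1 := ⟨hts.1.trans ht.1, ht.2⟩
      have h01' : t' ∈ Icc (0:ℝ) 1 := ⟨hts.1.trans ht'.1, ht'.2⟩
      rcases le_total t t' with h | h
      · have e1 := hWm t h01 t' h01' h
        have e2 := hVm t h01 t' h01' h
        simp only [hF1]
        apply hprod <;> linarith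
      · have e1 := hWm t' h01' t h01 h
        have e2 := hVm t' h01' t h01 h
        simp only [hF1]
        exact mul_nonneg (by linarith) (by linarith)
    · have h01 : t ∈ Icc (0:ℝ) 1 := ⟨hts.1.trans ht.1, ht.2⟩
      have h01' : t' ∈ Icc (0:ℝ) 1 := ⟨ht'.1, ht'.2.trans hts.2⟩
      have e1 : W t ≤ (m:ℝ) + τX := (hWb' t h01).2
      have e2 : τX ≤ W t' := (hWb' t' h01').1
      have e3 : V t ≤ (n:ℝ) + τY := (hVb' t h01).2
      have e4 : τY ≤ V t' := (hVb' t' h01').1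
      simp only [hF1, hF2]
      apply hprod <;> linarith
    · have h01 : t ∈ Icc (0:ℝ) 1 := ⟨ht.1, ht.2.trans hts.2⟩
      have h01' : t' ∈ Icc (0:ℝ) 1 := ⟨hts.1.trans ht'.1, ht'.2⟩
      have e1 : W t' ≤ (m:ℝ) + τX := (hWb' t' h01').2
      have e2 : τX ≤ W t := (hWb' t h01).1
      have e3 : V t' ≤ (n:ℝ) + τY := (hVb' t' h01').2
      have e4 : τY ≤ V t := (hVb' t h01).1
      simp only [hF1, hF2]
      exact mul_nonneg (by linarith) (by linarith)
    · have h01 : t ∈ Icc (0:ℝ) 1 := ⟨ht.1, ht.2.trans hts.2⟩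
      have h01' : t' ∈ Icc (0:ℝ) 1 := ⟨ht'.1, ht'.2.trans hts.2⟩
      rcases le_total t t' with h | h
      · have e1 := hWm t h01 t' h01' h
        have e2 := hVm t h01 t' h01' h
        simp only [hF2]
        apply hprod <;> linarith
      · have e1 := hWm t' h01' t h01 h
        have e2 := hVm t' h01' t h01 h
        simp only [hF2]
        exact mul_nonneg (by linarith) (by linarith)
  · refine Or.inl ⟨ts, ⟨le_rfl, hts.2⟩, ?_⟩
    simp only [hF1, hVts, Prod.mk.injEq]
    constructor
    · rw [← hUs]; ring
    · ring
  · refine Or.inr ⟨ts, ⟨hts.1, le_rfl⟩, ?_⟩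
    simp only [hF2, hVts, Prod.mk.injEq]
    constructor
    · rw [← hUs]; ring
    · trivial

end Forward
theorem stmt2
    (k m n : ℕ) (hk : 1 ≤ k) (hm : 1 ≤ m) (hn : 1 ≤ n)
    (x y : ℕ → EuclideanSpace ℝ (Fin k)) (hx : x m = x 0) (hy : y n = y 0)
    (ε : ℝ) (hε : 0 ≤ ε)
    (Dε : Set (ℝ × ℝ)) (hDε : Dε = Dfree m n x y ε) :
    (∃ φX φY : ℝ → EuclideanSpace ℝ (Fin k),
        IsReparam m x φX ∧ IsReparam n y φY ∧
        ∀ t ∈ Icc (0:ℝ) 1, dist (φX t) (φY t) ≤ ε) ↔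
      ∃ u ∈ Icc (0:ℝ) (m:ℝ),
        (u, (0:ℝ)) ∈ gUp m n Dε ∧ (u + m, (n:ℝ)) ∈ gDown m Dε ∧
        u + m ≤ rUp m n Dε (u, (0:ℝ)) ∧ u ≤ rDown m Dε (u + m, (n:ℝ)) := by
  subst hDε
  constructor
  · rintro ⟨φX, φY, hX, hY, hd⟩
    obtain ⟨u, hu, γ, hγ, hp, hq⟩ := path_of_reparams hm hn hx hy hX hY hd
    obtain ⟨c1, c2, c3, c4⟩ := conditions_of_path hm hn hu hγ hp hq
    exact ⟨u, hu, c1, c2, c3, c4⟩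
  · rintro ⟨u, hu, h1, h2, h3, h4⟩
    obtain ⟨γ, hγ, hp, hq⟩ := exists_path_of_conditions hm hn (isCompact_Dfree hx)
      Dfree_subset hu h1 h2 h3 h4
    exact reparams_of_path hm hn hu hγ hp hq
end
end

section
/- For every (u,v) ∈ g_↓ with v > 0, the set {u* ∈ [0,2m] : (u,v) and (u*,0) are mutually reachable} is nonempty and has a greatest element; likewise, for every (u,v) ∈ g↑, the set {u* ∈ [0,2m] : (u,v) and (u*,n) are mutually reachable} is nonempty and has a greatest element. -/
open Set Filter Metric Bornology

noncomputable section

lemma fCurve_natCast {k : ℕ} (x : ℕ → EuclideanSpace ℝ (Fin k)) (j : ℕ) :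
    fCurve x (j : ℝ) = x j := by
  simp [fCurve, Int.fract_natCast, Int.floor_natCast]

lemma fCurve_eqOn {k : ℕ} (x : ℕ → EuclideanSpace ℝ (Fin k)) (i : ℕ) :
    EqOn (fCurve x)
      (fun t => (1 - (t - i)) • x i + (t - i) • x (i + 1)) (Icc (i : ℝ) (i + 1)) := by
  intro t ht
  rcases eq_or_lt_of_le ht.2 with h | h
  · subst h
    have h1 : ((i : ℝ) + 1) = ((i + 1 : ℕ) : ℝ) := by push_cast; ring
    rw [h1, fCurve_natCast]
    simp
  · have hfl : ⌊t⌋ = (i : ℤ) := by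
      rw [Int.floor_eq_iff]
      constructor
      · exact_mod_cast ht.1
      · push_cast; exact h
    have hfr : Int.fract t = t - i := by
      rw [Int.fract, hfl]; norm_num
    simp [fCurve, hfl, hfr]

lemma contOn_union {α β : Type*} [TopologicalSpace α] [TopologicalSpace β]
    {f : α → β} {s t : Set α} (hs : IsClosed s) (ht : IsClosed t)
    (h1 : ContinuousOn f s) (h2 : ContinuousOn f t) : ContinuousOn f (s ∪ t) := by
  intro z hz
  rcases hz with hz | hz
  · refine (h1 z hz).union ?_
    by_cases hzt : z ∈ t
    · exact h2 z hzt
    · exact continuousWithinAt_of_notMem_closure (by rwa [ht.closure_eq])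
  · refine ContinuousWithinAt.union ?_ (h2 z hz)
    by_cases hzs : z ∈ s
    · exact h1 z hzs
    · exact continuousWithinAt_of_notMem_closure (by rwa [hs.closure_eq])

lemma fCurve_contOn_Icc {k : ℕ} (x : ℕ → EuclideanSpace ℝ (Fin k)) (i : ℕ) :
    ContinuousOn (fCurve x) (Icc (i : ℝ) (i + 1)) := by
  refine ContinuousOn.congr ?_ (fCurve_eqOn x i)
  fun_prop

lemma fCurve_contOn {k : ℕ} (x : ℕ → EuclideanSpace ℝ (Fin k)) (N : ℕ) :
    ContinuousOn (fCurve x) (Icc (0 : ℝ) (N : ℝ)) := by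
  induction N with
  | zero =>
    simp only [Nat.cast_zero, Icc_self]
    intro z hz
    rcases hz with rfl
    exact continuousWithinAt_singleton
  | succ N ih =>
    have hcast : ((N + 1 : ℕ) : ℝ) = (N : ℝ) + 1 := by push_cast; ring
    rw [hcast, ← Icc_union_Icc_eq_Icc (by positivity : (0:ℝ) ≤ N) (by linarith : (N:ℝ) ≤ N + 1)]
    exact contOn_union isClosed_Icc isClosed_Icc ih (fCurve_contOn_Icc x N)

lemma fCurveExt_contOn {k : ℕ} (m : ℕ) (x : ℕ → EuclideanSpace ℝ (Fin k))
    (hx : x m = x 0) : ContinuousOn (fCurveExt m x) (Icc (0 : ℝ) (2 * (m : ℝ))) := by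
  have hm0 : (0 : ℝ) ≤ (m : ℝ) := by positivity
  have hm2 : (m : ℝ) ≤ 2 * (m : ℝ) := by linarith
  rw [← Icc_union_Icc_eq_Icc hm0 hm2]
  refine contOn_union isClosed_Icc isClosed_Icc ?_ ?_
  · refine ContinuousOn.congr (fCurve_contOn x m) ?_
    intro u hu
    simp only [fCurveExt, if_pos hu.2]
  · have hc : ContinuousOn (fun u : ℝ => fCurve x (u - m)) (Icc (m : ℝ) (2 * m)) := by
      refine (fCurve_contOn x m).comp (by fun_prop) ?_
      intro u hu
      simp only [mem_Icc] at hu ⊢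
      constructor
      · linarith [hu.1]
      · linarith [hu.2]
    refine ContinuousOn.congr hc ?_
    intro u hu
    by_cases h : u ≤ (m : ℝ)
    · have : u = (m : ℝ) := le_antisymm h hu.1
      subst this
      simp only [fCurveExt, if_pos le_rfl, sub_self]
      rw [fCurve_natCast, hx]
      have : (0 : ℝ) = ((0 : ℕ) : ℝ) := by norm_num
      rw [this, fCurve_natCast]
    · simp only [fCurveExt, if_neg h]

lemma Dfull_isClosed (m n : ℕ) : IsClosed (Dfull m n) :=
  isClosed_Icc.prod isClosed_Icc

lemma Dfree_isClosed {k : ℕ} (m n : ℕ) (x y : ℕ → EuclideanSpace ℝ (Fin k))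
    (hx : x m = x 0) (ε : ℝ) : IsClosed (Dfree m n x y ε) := by
  have hF : ContinuousOn (fun p : ℝ × ℝ => dist (fCurveExt m x p.1) (fCurve y p.2))
      (Dfull m n) := by
    refine Continuous.comp_continuousOn continuous_dist (ContinuousOn.prodMk ?_ ?_)
    · exact (fCurveExt_contOn m x hx).comp continuous_fst.continuousOn
        (fun p hp => hp.1)
    · exact (fCurve_contOn y n).comp continuous_snd.continuousOn (fun p hp => hp.2)
  have : Dfree m n x y ε =
      Dfull m n ∩ (fun p : ℝ × ℝ => dist (fCurveExt m x p.1) (fCurve y p.2)) ⁻¹' Iic ε := by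
    ext p; simp [Dfree, Set.mem_sep_iff, Set.mem_inter_iff, Set.mem_preimage]
  rw [this]
  exact ContinuousOn.preimage_isClosed_of_isClosed hF (Dfull_isClosed m n) isClosed_Iic

lemma Dfree_isBounded {k : ℕ} (m n : ℕ) (x y : ℕ → EuclideanSpace ℝ (Fin k)) (ε : ℝ) :
    IsBounded (Dfree m n x y ε) :=
  ((isBounded_Icc (0:ℝ) (2*(m:ℝ))).prod (isBounded_Icc (0:ℝ) (n:ℝ))).subset
    (fun p hp => hp.1)

lemma key (m : ℕ) (Dε : Set (ℝ × ℝ)) (hcl : IsClosed Dε) (hbd : IsBounded Dε)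
    (p : ℝ × ℝ) (c : ℝ)
    (hne : {u : ℝ | u ∈ Icc (0:ℝ) (2*(m:ℝ)) ∧ Reach Dε p (u, c)}.Nonempty) :
    IsGreatest {u : ℝ | u ∈ Icc (0:ℝ) (2*(m:ℝ)) ∧ Reach Dε p (u, c)}
      (sSup {u : ℝ | u ∈ Icc (0:ℝ) (2*(m:ℝ)) ∧ Reach Dε p (u, c)}) := by
  set S := {u : ℝ | u ∈ Icc (0:ℝ) (2*(m:ℝ)) ∧ Reach Dε p (u, c)} with hSdef
  have hbdd : BddAbove S := BddAbove.mono (fun u hu => hu.1) bddAbove_Icc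
  obtain ⟨u, humono, hulim, huS⟩ := exists_seq_tendsto_sSup hne hbdd
  set u₀ := sSup S with hu₀
  have hpaths : ∀ i, ∃ γ : Set (ℝ × ℝ), IsMonPath Dε γ ∧ p ∈ γ ∧ ((u i, c) : ℝ × ℝ) ∈ γ :=
    fun i => (huS i).2
  choose γ hγ hpγ hqγ using hpaths
  have hγDε : ∀ i, γ i ⊆ Dε := fun i => (hγ i).1
  have hγconn : ∀ i, IsConnected (γ i) := fun i => (hγ i).2.1
  have hγchain : ∀ i, ∀ a ∈ γ i, ∀ b ∈ γ i, (a.1 - b.1) * (a.2 - b.2) ≥ 0 :=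
    fun i => (hγ i).2.2
  set U : Ultrafilter ℕ := Ultrafilter.of atTop with hUdef
  have hUatTop : (U : Filter ℕ) ≤ atTop := Ultrafilter.of_le atTop
  set Γ : Set (ℝ × ℝ) := {z | ∀ r > 0, {i | (γ i ∩ ball z r).Nonempty} ∈ U} with hΓdef
  have hpΓ : p ∈ Γ := by
    intro r hr
    refine Filter.mem_of_superset Filter.univ_mem ?_
    intro i _
    exact ⟨p, hpγ i, mem_ball_self hr⟩
  have hqΓ : ((u₀, c) : ℝ × ℝ) ∈ Γ := by
    intro r hr
    have h1 : {i | dist (u i) u₀ < r} ∈ U :=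
      hUatTop (hulim (Metric.ball_mem_nhds u₀ hr))
    refine Filter.mem_of_superset h1 ?_
    intro i hi
    refine ⟨(u i, c), hqγ i, ?_⟩
    rw [mem_ball, Prod.dist_eq]
    simp only [dist_self]
    exact max_lt hi hr
  have hΓsub : Γ ⊆ Dε := by
    intro z hz
    rw [← hcl.closure_eq, Metric.mem_closure_iff]
    intro r hr
    obtain ⟨i, hi⟩ := Filter.nonempty_of_mem (hz r hr)
    obtain ⟨w, hwγ, hwb⟩ := hi
    exact ⟨w, hγDε i hwγ, by rw [dist_comm]; exact mem_ball.mp hwb⟩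
  have hΓclosed : IsClosed Γ := by
    rw [← isOpen_compl_iff, Metric.isOpen_iff]
    intro z hz
    rw [mem_compl_iff, hΓdef, mem_setOf_eq] at hz
    push_neg at hz
    obtain ⟨r, hr, hnotU⟩ := hz
    refine ⟨r / 2, by positivity, ?_⟩
    intro w hw
    simp only [mem_compl_iff]
    intro hwΓ
    apply hnotU
    refine Filter.mem_of_superset (hwΓ (r / 2) (by positivity)) ?_
    rintro i ⟨e, heγ, heb⟩
    refine ⟨e, heγ, ball_subset_ball' ?_ heb⟩
    have : dist w z < r / 2 := mem_ball.mp hw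
    linarith
  have hΓchain : ∀ a ∈ Γ, ∀ b ∈ Γ, (a.1 - b.1) * (a.2 - b.2) ≥ 0 := by
    intro a ha b hb
    by_contra h
    push_neg at h
    have hopen : IsOpen {q : (ℝ × ℝ) × (ℝ × ℝ) | (q.1.1 - q.2.1) * (q.1.2 - q.2.2) < 0} :=
      isOpen_lt (by fun_prop) continuous_const
    obtain ⟨δ, hδ, hball⟩ := Metric.isOpen_iff.mp hopen (a, b) h
    obtain ⟨i, hi⟩ := Filter.nonempty_of_mem (Filter.inter_mem (ha δ hδ) (hb δ hδ))
    obtain ⟨⟨a', ha'γ, ha'b⟩, ⟨b', hb'γ, hb'b⟩⟩ := hi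
    have h1 := hγchain i a' ha'γ b' hb'γ
    have hmem : ((a', b') : (ℝ × ℝ) × (ℝ × ℝ)) ∈ ball ((a, b) : (ℝ × ℝ) × (ℝ × ℝ)) δ := by
      rw [mem_ball, Prod.dist_eq]
      exact max_lt (mem_ball.mp ha'b) (mem_ball.mp hb'b)
    have h2 := hball hmem
    simp only [mem_setOf_eq] at h2
    linarith
  have hΓcompact : IsCompact Γ :=
    isCompact_of_isClosed_isBounded hΓclosed (hbd.subset hΓsub)
  have hΓpre : IsPreconnected Γ := by
    intro O1 O2 hO1 hO2 hcov ⟨a, haΓ, haO1⟩ ⟨b, hbΓ, hbO2⟩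
    by_contra hemp
    rw [not_nonempty_iff_eq_empty] at hemp
    set A := Γ \ O2 with hAdef
    set B := Γ \ O1 with hBdef
    have hAclosed : IsClosed A := hΓclosed.sdiff hO2
    have hBclosed : IsClosed B := hΓclosed.sdiff hO1
    have hAcomp : IsCompact A := hΓcompact.of_isClosed_subset hAclosed diff_subset
    have hdisjAB : Disjoint A B := by
      rw [Set.disjoint_left]
      rintro z ⟨hzΓ, hz2⟩ ⟨_, hz1⟩
      rcases hcov hzΓ with h | h
      · exact hz1 h
      · exact hz2 h
    have haA : a ∈ A := by
      refine ⟨haΓ, fun h2 => ?_⟩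
      have : a ∈ Γ ∩ (O1 ∩ O2) := ⟨haΓ, haO1, h2⟩
      rw [hemp] at this
      exact this
    have hbB : b ∈ B := by
      refine ⟨hbΓ, fun h1 => ?_⟩
      have : b ∈ Γ ∩ (O1 ∩ O2) := ⟨hbΓ, h1, hbO2⟩
      rw [hemp] at this
      exact this
    have hcoverAB : Γ ⊆ A ∪ B := by
      intro z hz
      rcases hcov hz with h | h
      · refine Or.inl ⟨hz, fun h2 => ?_⟩
        have : z ∈ Γ ∩ (O1 ∩ O2) := ⟨hz, h, h2⟩
        rw [hemp] at this
        exact this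
      · refine Or.inr ⟨hz, fun h1 => ?_⟩
        have : z ∈ Γ ∩ (O1 ∩ O2) := ⟨hz, h1, h⟩
        rw [hemp] at this
        exact this
    obtain ⟨δ, hδ, hdisjT⟩ := hdisjAB.exists_thickenings hAcomp hBclosed
    have hS3 : {i | γ i ⊆ thickening δ Γ} ∈ U := by
      by_contra hS3
      rw [← Ultrafilter.compl_mem_iff_notMem] at hS3
      have hch : ∀ i, ∃ w : ℝ × ℝ,
          i ∈ {i | γ i ⊆ thickening δ Γ}ᶜ → w ∈ γ i ∧ w ∉ thickening δ Γ := by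
        intro i
        by_cases hi : i ∈ {i | γ i ⊆ thickening δ Γ}ᶜ
        · obtain ⟨w, hw1, hw2⟩ := not_subset.mp hi
          exact ⟨w, fun _ => ⟨hw1, hw2⟩⟩
        · exact ⟨p, fun h => absurd h hi⟩
      choose z hz using hch
      have hDεcomp : IsCompact Dε := isCompact_of_isClosed_isBounded hcl hbd
      have hmapDε : (Ultrafilter.map z U : Filter (ℝ × ℝ)) ≤ 𝓟 Dε := by
        rw [le_principal_iff]
        rw [Ultrafilter.mem_coe, Ultrafilter.mem_map]
        exact Filter.mem_of_superset hS3 (fun i hi => hγDε i (hz i hi).1)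
      obtain ⟨q, hqDε, hq⟩ := hDεcomp.ultrafilter_le_nhds (Ultrafilter.map z U) hmapDε
      have hqΓ' : q ∈ Γ := by
        intro r hr
        have hb1 : z ⁻¹' (ball q r) ∈ U := by
          have := hq (Metric.ball_mem_nhds q hr)
          rwa [Ultrafilter.mem_coe, Ultrafilter.mem_map] at this
        refine Filter.mem_of_superset (Filter.inter_mem hb1 hS3) ?_
        rintro i ⟨hib, hiT⟩
        exact ⟨z i, (hz i hiT).1, hib⟩
      have hthick : z ⁻¹' (thickening δ Γ) ∈ U := by
        have := hq (isOpen_thickening.mem_nhds (self_subset_thickening hδ Γ hqΓ'))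
        rwa [Ultrafilter.mem_coe, Ultrafilter.mem_map] at this
      obtain ⟨i, hi1, hi2⟩ := Filter.nonempty_of_mem (Filter.inter_mem hthick hS3)
      exact (hz i hi2).2 hi1
    obtain ⟨i, hiS3, hia, hib⟩ := Filter.nonempty_of_mem
      (Filter.inter_mem hS3 (Filter.inter_mem (haΓ δ hδ) (hbΓ δ hδ)))
    have hγsub : γ i ⊆ thickening δ A ∪ thickening δ B := by
      intro w hw
      have h1 : w ∈ thickening δ Γ := hiS3 hw
      rw [← thickening_union]
      exact thickening_subset_of_subset δ hcoverAB h1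
    have hmeetsA : (γ i ∩ thickening δ A).Nonempty := by
      obtain ⟨e, heγ, heb⟩ := hia
      exact ⟨e, heγ, mem_thickening_iff.mpr ⟨a, haA, mem_ball.mp heb⟩⟩
    have hmeetsB : (γ i ∩ thickening δ B).Nonempty := by
      obtain ⟨e, heγ, heb⟩ := hib
      exact ⟨e, heγ, mem_thickening_iff.mpr ⟨b, hbB, mem_ball.mp heb⟩⟩
    obtain ⟨w, hw⟩ := (hγconn i).isPreconnected (thickening δ A) (thickening δ B)
      isOpen_thickening isOpen_thickening hγsub hmeetsA hmeetsB
    exact Set.disjoint_left.mp hdisjT hw.2.1 hw.2.2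
  constructor
  · constructor
    · constructor
      · obtain ⟨v, hv⟩ := hne
        exact le_trans hv.1.1 (le_csSup hbdd hv)
      · exact csSup_le hne (fun v hv => hv.1.2)
    · exact ⟨Γ, ⟨hΓsub, ⟨⟨p, hpΓ⟩, hΓpre⟩, hΓchain⟩, hpΓ, hqΓ⟩
  · exact fun v hv => le_csSup hbdd hv


theorem stmt5
    (k m n : ℕ) (hk : 1 ≤ k) (hm : 1 ≤ m) (hn : 1 ≤ n)
    (x y : ℕ → EuclideanSpace ℝ (Fin k)) (hx : x m = x 0) (hy : y n = y 0)
    (ε : ℝ) (hε : 0 ≤ ε)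
    (Dε : Set (ℝ × ℝ)) (hDε : Dε = Dfree m n x y ε) :
    (∀ p ∈ gDown m Dε, 0 < p.2 →
      ({u : ℝ | u ∈ Icc (0:ℝ) (2*(m:ℝ)) ∧ Reach Dε p (u, (0:ℝ))}.Nonempty ∧
        ∃ u' : ℝ, IsGreatest {u : ℝ | u ∈ Icc (0:ℝ) (2*(m:ℝ)) ∧ Reach Dε p (u, (0:ℝ))} u')) ∧
    (∀ p ∈ gUp m n Dε,
      ({u : ℝ | u ∈ Icc (0:ℝ) (2*(m:ℝ)) ∧ Reach Dε p (u, (n:ℝ))}.Nonempty ∧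
        ∃ u' : ℝ, IsGreatest {u : ℝ | u ∈ Icc (0:ℝ) (2*(m:ℝ)) ∧ Reach Dε p (u, (n:ℝ))} u')) := by
  have hclosed : IsClosed Dε := by rw [hDε]; exact Dfree_isClosed m n x y hx ε
  have hbound : IsBounded Dε := by rw [hDε]; exact Dfree_isBounded m n x y ε
  constructor
  · intro p hp _
    obtain ⟨hpD, q, hqB, hreach⟩ := hp
    have hq2 : q.2 = (0:ℝ) := hqB.2
    have hq : q = (q.1, (0:ℝ)) := Prod.ext rfl hq2
    have hne : {u : ℝ | u ∈ Icc (0:ℝ) (2*(m:ℝ)) ∧ Reach Dε p (u, (0:ℝ))}.Nonempty :=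
      ⟨q.1, hqB.1, by rwa [hq] at hreach⟩
    exact ⟨hne, _, key m Dε hclosed hbound p 0 hne⟩
  · intro p hp
    obtain ⟨hpD, q, hqB, hreach⟩ := hp
    have hq2 : q.2 = (n:ℝ) := hqB.2
    have hq : q = (q.1, (n:ℝ)) := Prod.ext rfl hq2
    have hne : {u : ℝ | u ∈ Icc (0:ℝ) (2*(m:ℝ)) ∧ Reach Dε p (u, (n:ℝ))}.Nonempty :=
      ⟨q.1, hqB.1, by rwa [hq] at hreach⟩
    exact ⟨hne, _, key m Dε hclosed hbound p n hne⟩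
end
end
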